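/- Let S, T ⊆ {1,...,n}² with S sum-free, and let a ∈ S. Then |S ∩ (T ∪ (a − T))| ≤ |T|, where a − T = {a − t : t ∈ T}. -/

import Mathlib

theorem stmt_8 (n : ℤ) (S T : Finset (ℤ × ℤ))
    (hS : S ⊆ Finset.Icc 1 n ×ˢ Finset.Icc 1 n)
    (hT : T ⊆ Finset.Icc 1 n ×ˢ Finset.Icc 1 n)
    (hsf : ∀ u ∈ S, ∀ v ∈ S, u + v ∉ S)
    (a : ℤ × ℤ) (ha : a ∈ S) :
    (S ∩ (T ∪ T.image (fun t => a - t))).card ≤ T.card := by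
  apply Finset.card_le_card_of_injOn (fun x => if x ∈ T then x else a - x)
  · intro x hx
    simp only [Finset.mem_coe, Finset.mem_inter, Finset.mem_union, Finset.mem_image] at hx
    show (if x ∈ T then x else a - x) ∈ T
    split
    · assumption
    · rcases hx.2 with h | ⟨t, ht, rfl⟩
      · exact absurd h ‹¬ _›
      · simpa using ht
  · intro x hx y hy hxy
    simp only [Finset.mem_coe, Finset.mem_inter] at hx hy
    by_cases hxT : x ∈ T <;> by_cases hyT : y ∈ T <;>
      simp only [hxT, hyT, if_pos, if_neg, if_true, if_false] at hxy
    · exact hxy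
    · exfalso
      have : x + y = a := by rw [hxy]; ring
      exact hsf x hx.1 y hy.1 (this ▸ ha)
    · exfalso
      have : y + x = a := by rw [← hxy]; ring
      exact hsf y hy.1 x hx.1 (this ▸ ha)
    · have := sub_right_injective hxy; exact this
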